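/- Let k be a field, n ≥ 1, and λ ∈ k with λ ≠ 0. In M_{(n+1)×(n+1)}(k) define aᵢ = I + E_{1,i+1} and bᵢ = I − λE_{i+1,i+1} for i = 1,…,n, where I is the identity matrix and E_{p,q} is the matrix with (p,q)-entry 1 and all other entries 0. Then: aᵢaⱼ = aⱼaᵢ and bᵢbⱼ = bⱼbᵢ for all i,j; aᵢbⱼ = bⱼaᵢ for all i ≠ j; and aᵢbᵢ − bᵢaᵢ = −λE_{1,i+1} ≠ 0 for every i. Moreover, if in addition λ ≠ 1, then all the matrices aᵢ and bᵢ are invertible. -/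

import Mathlib

open Matrix

/-- Sharpness of the bound `r ≥ n + 1`: the matrices `aᵢ = I + E_{1,i+1}` and
`bᵢ = I - λ E_{i+1,i+1}` in `M_{n+1}(k)` satisfy all the commutation relations, have
`aᵢbᵢ - bᵢaᵢ = -λ E_{1,i+1} ≠ 0`, and are invertible when `λ ≠ 1`.
(Indices are zero-based: row `0` plays the role of row `1` in the paper.) -/
theorem sharpness_matrices (k : Type*) [Field k] (n : ℕ) (hn : 1 ≤ n)
    (lam : k) (hlam : lam ≠ 0)
    (a b : Fin n → Matrix (Fin (n + 1)) (Fin (n + 1)) k)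
    (ha : ∀ i, a i = 1 + Matrix.single 0 i.succ 1)
    (hb : ∀ i, b i = 1 - lam • Matrix.single i.succ i.succ 1) :
    (∀ i j, a i * a j = a j * a i) ∧
    (∀ i j, b i * b j = b j * b i) ∧
    (∀ i j, i ≠ j → a i * b j = b j * a i) ∧
    (∀ i, a i * b i - b i * a i = -lam • Matrix.single 0 i.succ 1) ∧
    (∀ i, a i * b i - b i * a i ≠ 0) ∧
    (lam ≠ 1 → ∀ i, IsUnit (a i) ∧ IsUnit (b i)) := by
  have hEE : ∀ i j : Fin n, (single 0 i.succ (1:k) : Matrix (Fin (n+1)) (Fin (n+1)) k) *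
      single 0 j.succ 1 = 0 := fun i j =>
    Matrix.single_mul_single_of_ne _ _ _ _ (Fin.succ_ne_zero i) _
  have hFE : ∀ i j : Fin n, (single i.succ i.succ (1:k) : Matrix (Fin (n+1)) (Fin (n+1)) k) *
      single 0 j.succ 1 = 0 := fun i j =>
    Matrix.single_mul_single_of_ne _ _ _ _ (Fin.succ_ne_zero i) _
  have hFFne : ∀ i j : Fin n, i ≠ j →
      (single i.succ i.succ (1:k) : Matrix (Fin (n+1)) (Fin (n+1)) k) *
      single j.succ j.succ 1 = 0 := fun i j h =>
    Matrix.single_mul_single_of_ne _ _ _ _ (fun hc => h (Fin.succ_injective _ hc)) _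
  have hEFne : ∀ i j : Fin n, i ≠ j →
      (single 0 i.succ (1:k) : Matrix (Fin (n+1)) (Fin (n+1)) k) *
      single j.succ j.succ 1 = 0 := fun i j h =>
    Matrix.single_mul_single_of_ne _ _ _ _ (fun hc => h (Fin.succ_injective _ hc)) _
  have hEF : ∀ i : Fin n, (single 0 i.succ (1:k) : Matrix (Fin (n+1)) (Fin (n+1)) k) *
      single i.succ i.succ 1 = single 0 i.succ 1 := fun i => by
    rw [Matrix.single_mul_single_same, one_mul]
  have hFF : ∀ i : Fin n, (single i.succ i.succ (1:k) : Matrix (Fin (n+1)) (Fin (n+1)) k) *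
      single i.succ i.succ 1 = single i.succ i.succ 1 := fun i => by
    rw [Matrix.single_mul_single_same, one_mul]
  have comm : ∀ i, a i * b i - b i * a i = -lam • single 0 i.succ 1 := by
    intro i
    rw [ha, hb]
    simp only [mul_sub, sub_mul, add_mul, mul_add, mul_smul_comm, smul_mul_assoc,
      hEF, hFE, one_mul, mul_one, smul_zero]
    module
  refine ⟨?_, ?_, ?_, comm, ?_, ?_⟩
  · intro i j
    rw [ha, ha]
    simp only [add_mul, mul_add, hEE, one_mul, mul_one]
    abel
  · intro i j
    rcases eq_or_ne i j with rfl | h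
    · rfl
    · rw [hb, hb]
      simp only [sub_mul, mul_sub, mul_smul_comm, smul_mul_assoc,
        hFFne i j h, hFFne j i h.symm, one_mul, mul_one, smul_zero]
      module
  · intro i j h
    rw [ha, hb]
    simp only [mul_sub, sub_mul, add_mul, mul_add, mul_smul_comm, smul_mul_assoc,
      hEFne i j h, hFE, one_mul, mul_one, smul_zero]
    module
  · intro i hzero
    rw [comm i] at hzero
    have := congrFun (congrFun hzero 0) i.succ
    simp [Matrix.single_apply_same] at this
    exact hlam this
  · intro hl1 i
    constructor
    · have h1 : a i * (1 - single 0 i.succ 1) = 1 := ?_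
      · exact ⟨⟨a i, _, h1, mul_eq_one_comm.mp h1⟩, rfl⟩
      rw [ha]
      simp only [add_mul, mul_sub, hEE, one_mul, mul_one]
      abel
    · have h1 : b i * (1 - (lam / (lam - 1)) • single i.succ i.succ 1) = 1 := ?_
      · exact ⟨⟨b i, _, h1, mul_eq_one_comm.mp h1⟩, rfl⟩
      have hl : lam - 1 ≠ 0 := sub_ne_zero.mpr hl1
      rw [hb]
      simp only [sub_mul, mul_sub, smul_sub, smul_mul_assoc, mul_smul_comm, smul_smul, hFF,
        one_mul, mul_one]
      have hc : lam / (lam - 1) * lam = lam + lam / (lam - 1) := by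
        field_simp; ring
      rw [hc, add_smul]
      module
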